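/- Let γ > 1 and let ρ̄, ρ̂ be constants with 0 < ρ̄ ≤ ρ̂. Let Ω ⊂ ℝ³ be a bounded measurable set of positive Lebesgue measure and let ρ : Ω → [0, 2ρ̂] be measurable. Let P̄ = (1/|Ω|)∫_Ω ρ(x)^γ dx denote the average of the pressure. Then there exists a constant C > 0, depending only on γ, ρ̄ and ρ̂, such that ∫_Ω (ρ(x)^γ − P̄)² dx ≤ C ∫_Ω G(ρ(x)) dx. -/

import Mathlib

open MeasureTheory Real Set

noncomputable section

/-- The potential energy density `G(ρ)` relative to the reference density `ρ̄`:
`G(ρ) = (ρ^γ − ρ̄^γ − γ ρ̄^(γ−1) (ρ − ρ̄)) / (γ − 1)`. -/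
def Gfun (γ ρbar r : ℝ) : ℝ :=
  (Real.rpow r γ - Real.rpow ρbar γ - γ * Real.rpow ρbar (γ - 1) * (r - ρbar)) / (γ - 1)

section Aux

variable {γ ρbar ρhat : ℝ}

/-- lower Lipschitz bound for `s ↦ s^(γ-1)` on `[ρbar/2, 2ρhat]`. -/
lemma slope_lower (hγ : 1 < γ) (hρbar : 0 < ρbar) :
    ∀ a b : ℝ, ρbar / 2 ≤ a → a < b → b ≤ 2 * ρhat →
      (γ - 1) * min ((ρbar / 2) ^ (γ - 2)) ((2 * ρhat) ^ (γ - 2)) * (b - a)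
        ≤ b ^ (γ - 1) - a ^ (γ - 1) := by
  intro a b ha hab hb
  have ha0 : 0 < a := lt_of_lt_of_le (by positivity) ha
  have hderiv : ∀ s ∈ Set.Ioo a b,
      HasDerivAt (fun s : ℝ => s ^ (γ - 1)) ((γ - 1) * s ^ (γ - 2)) s := by
    intro s hs
    have hs0 : s ≠ 0 := (lt_trans ha0 hs.1).ne'
    have := Real.hasDerivAt_rpow_const (x := s) (p := γ - 1) (Or.inl hs0)
    have h2 : γ - 1 - 1 = γ - 2 := by ring
    rwa [h2] at this
  have hcont : ContinuousOn (fun s : ℝ => s ^ (γ - 1)) (Set.Icc a b) :=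
    fun s hs => by
      have hs0 : s ≠ 0 := (lt_of_lt_of_le ha0 hs.1).ne'
      exact ((Real.hasDerivAt_rpow_const (p := γ - 1)
        (Or.inl hs0)).differentiableAt.continuousAt).continuousWithinAt
  obtain ⟨c, hc, hceq⟩ := exists_hasDerivAt_eq_slope (fun s : ℝ => s ^ (γ - 1))
    (fun s => (γ - 1) * s ^ (γ - 2)) hab hcont hderiv
  have hc0 : 0 < c := lt_of_lt_of_le (by positivity) (ha.trans hc.1.le)
  have hmin : min ((ρbar / 2) ^ (γ - 2)) ((2 * ρhat) ^ (γ - 2)) ≤ c ^ (γ - 2) := by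
    rcases le_or_gt 2 γ with h2 | h2
    · exact le_trans (min_le_left _ _)
        (Real.rpow_le_rpow (by positivity) (ha.trans hc.1.le) (by linarith))
    · exact le_trans (min_le_right _ _)
        (Real.rpow_le_rpow_of_nonpos hc0 (hc.2.le.trans hb) (by linarith))
  have heq : b ^ (γ - 1) - a ^ (γ - 1) = (γ - 1) * c ^ (γ - 2) * (b - a) := by
    rw [hceq, div_mul_cancel₀ _ (sub_ne_zero.2 hab.ne')]
  rw [heq]
  have hba : (0:ℝ) ≤ b - a := by linarith
  have hγ1 : (0:ℝ) ≤ γ - 1 := by linarith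
  nlinarith [mul_le_mul_of_nonneg_left hmin hγ1]

/-- upper Lipschitz bound for `s ↦ s^γ` on `[0, 2ρhat]`. -/
lemma slope_upper (hγ : 1 < γ) (hρhat : 0 < ρhat) :
    ∀ a b : ℝ, 0 ≤ a → a < b → b ≤ 2 * ρhat →
      b ^ γ - a ^ γ ≤ γ * (2 * ρhat) ^ (γ - 1) * (b - a) := by
  intro a b ha hab hb
  have hderiv : ∀ s ∈ Set.Ioo a b,
      HasDerivAt (fun s : ℝ => s ^ γ) (γ * s ^ (γ - 1)) s := fun s _ =>
    Real.hasDerivAt_rpow_const (Or.inr hγ.le)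
  have hcont : ContinuousOn (fun s : ℝ => s ^ γ) (Set.Icc a b) :=
    fun s _ => ((Real.hasDerivAt_rpow_const (x := s) (p := γ)
      (Or.inr hγ.le)).differentiableAt.continuousAt).continuousWithinAt
  obtain ⟨c, hc, hceq⟩ := exists_hasDerivAt_eq_slope (fun s : ℝ => s ^ γ)
    (fun s => γ * s ^ (γ - 1)) hab hcont hderiv
  have hc0 : 0 ≤ c := ha.trans hc.1.le
  have hcb : c ^ (γ - 1) ≤ (2 * ρhat) ^ (γ - 1) :=
    Real.rpow_le_rpow hc0 (hc.2.le.trans hb) (by linarith)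
  have heq : b ^ γ - a ^ γ = γ * c ^ (γ - 1) * (b - a) := by
    rw [hceq, div_mul_cancel₀ _ (sub_ne_zero.2 hab.ne')]
  rw [heq]
  have hba : (0:ℝ) ≤ b - a := by linarith
  nlinarith [mul_le_mul_of_nonneg_left hcb (le_of_lt (lt_trans zero_lt_one hγ))]

/-- derivative of g. -/
lemma g_hasDeriv (hγ : 1 < γ) (r : ℝ) :
    HasDerivAt (fun r : ℝ => r ^ γ - ρbar ^ γ - γ * ρbar ^ (γ - 1) * (r - ρbar))
      (γ * r ^ (γ - 1) - γ * ρbar ^ (γ - 1)) r := by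
  have h1 : HasDerivAt (fun r : ℝ => r ^ γ) (γ * r ^ (γ - 1)) r :=
    Real.hasDerivAt_rpow_const (Or.inr hγ.le)
  have h2 : HasDerivAt (fun r : ℝ => γ * ρbar ^ (γ - 1) * (r - ρbar))
      (γ * ρbar ^ (γ - 1)) r := by
    simpa using ((hasDerivAt_id r).sub_const ρbar).const_mul (γ * ρbar ^ (γ - 1))
  exact (h1.sub_const (ρbar ^ γ)).sub h2

/-- strong convexity bound on `[ρbar/2, 2ρhat]`, for an abstract modulus `mu`. -/
lemma strong_general (hγ : 1 < γ) (hρbar : 0 < ρbar) (hle : ρbar ≤ ρhat) (mu : ℝ)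
    (hslope : ∀ a b : ℝ, ρbar / 2 ≤ a → a < b → b ≤ 2 * ρhat →
      mu * (b - a) ≤ γ * (b ^ (γ - 1) - a ^ (γ - 1))) :
    ∀ r ∈ Set.Icc (ρbar / 2) (2 * ρhat),
      mu / 2 * (r - ρbar) ^ 2
        ≤ r ^ γ - ρbar ^ γ - γ * ρbar ^ (γ - 1) * (r - ρbar) := by
  have hρhat : 0 < ρhat := lt_of_lt_of_le hρbar hle
  have hd : ∀ r : ℝ, HasDerivAt
      (fun r : ℝ => r ^ γ - ρbar ^ γ - γ * ρbar ^ (γ - 1) * (r - ρbar)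
        - mu / 2 * (r - ρbar) ^ 2)
      (γ * r ^ (γ - 1) - γ * ρbar ^ (γ - 1) - mu * (r - ρbar)) r := by
    intro r
    have h1 := g_hasDeriv (ρbar := ρbar) hγ r
    have h2 : HasDerivAt (fun r : ℝ => mu / 2 * (r - ρbar) ^ 2) (mu * (r - ρbar)) r := by
      refine ((((hasDerivAt_id' r).sub_const ρbar).pow 2).const_mul (mu / 2)).congr_deriv ?_
      push_cast; ring
    exact h1.sub h2
  have hmono : MonotoneOn
      (fun r : ℝ => r ^ γ - ρbar ^ γ - γ * ρbar ^ (γ - 1) * (r - ρbar)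
        - mu / 2 * (r - ρbar) ^ 2) (Set.Icc ρbar (2 * ρhat)) := by
    apply monotoneOn_of_deriv_nonneg (convex_Icc _ _)
      (fun x _ => (hd x).differentiableAt.continuousAt.continuousWithinAt)
      (fun x _ => (hd x).differentiableAt.differentiableWithinAt)
    intro x hx
    rw [interior_Icc] at hx
    rw [(hd x).deriv]
    have := hslope ρbar x (by linarith) hx.1 hx.2.le
    linarith
  have hanti : AntitoneOn
      (fun r : ℝ => r ^ γ - ρbar ^ γ - γ * ρbar ^ (γ - 1) * (r - ρbar)
        - mu / 2 * (r - ρbar) ^ 2) (Set.Icc (ρbar / 2) ρbar) := by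
    apply antitoneOn_of_deriv_nonpos (convex_Icc _ _)
      (fun x _ => (hd x).differentiableAt.continuousAt.continuousWithinAt)
      (fun x _ => (hd x).differentiableAt.differentiableWithinAt)
    intro x hx
    rw [interior_Icc] at hx
    rw [(hd x).deriv]
    have := hslope x ρbar hx.1.le hx.2 (by linarith)
    linarith
  intro r hr
  rcases le_total r ρbar with hcase | hcase
  · have h2 := hanti ⟨hr.1, hcase⟩ ⟨by linarith, le_refl ρbar⟩ hcase
    simp only at h2
    nlinarith [h2]
  · have h2 := hmono ⟨le_refl ρbar, by linarith⟩ ⟨hcase, hr.2⟩ hcase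
    simp only at h2
    nlinarith [h2]

/-- g is antitone on `[0, ρbar]`. -/
lemma g_anti (hγ : 1 < γ) (hρbar : 0 < ρbar) :
    AntitoneOn (fun r : ℝ => r ^ γ - ρbar ^ γ - γ * ρbar ^ (γ - 1) * (r - ρbar))
      (Set.Icc (0:ℝ) ρbar) := by
  apply antitoneOn_of_deriv_nonpos (convex_Icc _ _)
    (fun x _ => (g_hasDeriv hγ x).differentiableAt.continuousAt.continuousWithinAt)
    (fun x _ => (g_hasDeriv hγ x).differentiableAt.differentiableWithinAt)
  intro x hx
  rw [interior_Icc] at hx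
  rw [(g_hasDeriv hγ x).deriv]
  have : x ^ (γ - 1) ≤ ρbar ^ (γ - 1) :=
    Real.rpow_le_rpow hx.1.le hx.2.le (by linarith)
  nlinarith [lt_trans zero_lt_one hγ]

/-- The key pointwise inequality. -/
lemma key_pointwise (hγ : 1 < γ) (hρbar : 0 < ρbar) (hle : ρbar ≤ ρhat) :
    ∃ K > (0:ℝ), ∀ r : ℝ, 0 ≤ r → r ≤ 2 * ρhat →
      0 ≤ Gfun γ ρbar r ∧ (r ^ γ - ρbar ^ γ) ^ 2 ≤ K * Gfun γ ρbar r := by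
  have hρhat : 0 < ρhat := lt_of_lt_of_le hρbar hle
  have hγ0 : (0:ℝ) < γ := lt_trans zero_lt_one hγ
  have hγ1 : (0:ℝ) < γ - 1 := by linarith
  -- abstract strong convexity modulus
  obtain ⟨mu, hmu0, hstrong⟩ : ∃ mu > (0:ℝ), ∀ r ∈ Set.Icc (ρbar / 2) (2 * ρhat),
      mu / 2 * (r - ρbar) ^ 2
        ≤ r ^ γ - ρbar ^ γ - γ * ρbar ^ (γ - 1) * (r - ρbar) := by
    have hmin0 : 0 < min ((ρbar / 2) ^ (γ - 2)) ((2 * ρhat) ^ (γ - 2)) :=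
      lt_min (Real.rpow_pos_of_pos (by positivity) _)
        (Real.rpow_pos_of_pos (by positivity) _)
    refine ⟨γ * (γ - 1) * min ((ρbar / 2) ^ (γ - 2)) ((2 * ρhat) ^ (γ - 2)),
      by positivity, ?_⟩
    apply strong_general hγ hρbar hle
    intro a b ha hab hb
    have := slope_lower (ρhat := ρhat) hγ hρbar a b ha hab hb
    nlinarith [mul_le_mul_of_nonneg_left this hγ0.le]
  -- abstract Lipschitz constant
  obtain ⟨L, hL0, hlip⟩ : ∃ L > (0:ℝ), ∀ a b : ℝ, 0 ≤ a → a < b → b ≤ 2 * ρhat →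
      b ^ γ - a ^ γ ≤ L * (b - a) := by
    have := Real.rpow_pos_of_pos (show (0:ℝ) < 2 * ρhat by positivity) (γ - 1)
    exact ⟨γ * (2 * ρhat) ^ (γ - 1), by positivity, slope_upper hγ hρhat⟩
  -- lower bound at ρbar/2
  obtain ⟨δ, hδ0, hδle⟩ : ∃ δ > (0:ℝ),
      δ ≤ (ρbar / 2) ^ γ - ρbar ^ γ - γ * ρbar ^ (γ - 1) * (ρbar / 2 - ρbar) := by
    refine ⟨mu * ρbar ^ 2 / 8, by positivity, ?_⟩
    have h := hstrong (ρbar / 2) ⟨le_refl _, by linarith⟩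
    nlinarith [h]
  obtain ⟨Kq, hKq0, hKq1, hKq2⟩ :
      ∃ Kq : ℝ, 0 < Kq ∧ 2 / mu ≤ Kq ∧ ρbar ^ 2 / δ ≤ Kq :=
    ⟨max (2 / mu) (ρbar ^ 2 / δ),
      lt_of_lt_of_le (by positivity) (le_max_left _ _), le_max_left _ _, le_max_right _ _⟩
  refine ⟨L ^ 2 * Kq * (γ - 1), by positivity, fun r hr0 hr2 => ?_⟩
  have hGfun : Gfun γ ρbar r
      = (r ^ γ - ρbar ^ γ - γ * ρbar ^ (γ - 1) * (r - ρbar)) / (γ - 1) := rfl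
  -- quadratic bound
  have hquad : 0 ≤ r ^ γ - ρbar ^ γ - γ * ρbar ^ (γ - 1) * (r - ρbar) ∧
      (r - ρbar) ^ 2 ≤ Kq * (r ^ γ - ρbar ^ γ - γ * ρbar ^ (γ - 1) * (r - ρbar)) := by
    rcases le_or_gt r (ρbar / 2) with hcase | hcase
    · have hmono := g_anti hγ hρbar (a := r) (b := ρbar / 2)
        ⟨hr0, by linarith⟩ ⟨by positivity, by linarith⟩ hcase
      simp only at hmono
      have hgr : δ ≤ r ^ γ - ρbar ^ γ - γ * ρbar ^ (γ - 1) * (r - ρbar) :=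
        le_trans hδle hmono
      constructor
      · linarith
      · have h1 : (r - ρbar) ^ 2 ≤ ρbar ^ 2 := by nlinarith
        have h2 : ρbar ^ 2 = ρbar ^ 2 / δ * δ := by field_simp
        have h3 : ρbar ^ 2 / δ * δ
            ≤ Kq * (r ^ γ - ρbar ^ γ - γ * ρbar ^ (γ - 1) * (r - ρbar)) :=
          mul_le_mul hKq2 hgr hδ0.le hKq0.le
        calc (r - ρbar) ^ 2 ≤ ρbar ^ 2 := h1
          _ = ρbar ^ 2 / δ * δ := h2
          _ ≤ _ := h3
    · have hgr := hstrong r ⟨hcase.le, hr2⟩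
      have hgr0 : 0 ≤ r ^ γ - ρbar ^ γ - γ * ρbar ^ (γ - 1) * (r - ρbar) :=
        le_trans (by positivity) hgr
      refine ⟨hgr0, ?_⟩
      have h1 : (r - ρbar) ^ 2
          ≤ 2 / mu * (r ^ γ - ρbar ^ γ - γ * ρbar ^ (γ - 1) * (r - ρbar)) := by
        rw [div_mul_eq_mul_div, le_div_iff₀ hmu0]
        linarith
      have h2 : 2 / mu * (r ^ γ - ρbar ^ γ - γ * ρbar ^ (γ - 1) * (r - ρbar))
          ≤ Kq * (r ^ γ - ρbar ^ γ - γ * ρbar ^ (γ - 1) * (r - ρbar)) :=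
        mul_le_mul_of_nonneg_right hKq1 hgr0
      linarith
  -- Lipschitz bound
  have habs : |r ^ γ - ρbar ^ γ| ≤ L * |r - ρbar| := by
    rcases lt_trichotomy r ρbar with hc | hc | hc
    · have := hlip r ρbar hr0 hc (by linarith)
      have hnn : r ^ γ ≤ ρbar ^ γ := Real.rpow_le_rpow hr0 hc.le hγ0.le
      rw [abs_sub_comm, abs_sub_comm r ρbar, abs_of_nonneg (by linarith),
        abs_of_nonneg (by linarith)]
      linarith
    · simp [hc]
    · have := hlip ρbar r hρbar.le hc hr2
      have hnn : ρbar ^ γ ≤ r ^ γ := Real.rpow_le_rpow hρbar.le hc.le hγ0.le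
      rw [abs_of_nonneg (by linarith), abs_of_nonneg (by linarith)]
      linarith
  have hsq : (r ^ γ - ρbar ^ γ) ^ 2 ≤ L ^ 2 * (r - ρbar) ^ 2 := by
    calc (r ^ γ - ρbar ^ γ) ^ 2 = |r ^ γ - ρbar ^ γ| ^ 2 := (sq_abs _).symm
      _ ≤ (L * |r - ρbar|) ^ 2 := by
          apply pow_le_pow_left₀ (abs_nonneg _) habs
      _ = L ^ 2 * (r - ρbar) ^ 2 := by rw [mul_pow, sq_abs]
  constructor
  · rw [hGfun]; exact div_nonneg hquad.1 hγ1.le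
  · rw [hGfun]
    have hstep : L ^ 2 * (r - ρbar) ^ 2
        ≤ L ^ 2 * (Kq * (r ^ γ - ρbar ^ γ - γ * ρbar ^ (γ - 1) * (r - ρbar))) :=
      mul_le_mul_of_nonneg_left hquad.2 (by positivity)
    calc (r ^ γ - ρbar ^ γ) ^ 2
        ≤ L ^ 2 * (Kq * (r ^ γ - ρbar ^ γ - γ * ρbar ^ (γ - 1) * (r - ρbar))) :=
          le_trans hsq hstep
      _ = L ^ 2 * Kq * (γ - 1)
          * ((r ^ γ - ρbar ^ γ - γ * ρbar ^ (γ - 1) * (r - ρbar)) / (γ - 1)) := by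
          field_simp

/-- Abstract integral step: variance bounded via pointwise comparison. -/
lemma integral_step {α : Type*} [MeasurableSpace α] (μ : Measure α) (Ω : Set α)
    (hΩm : MeasurableSet Ω) (hfin : μ Ω ≠ ⊤) (hpos : 0 < μ Ω)
    (p G : α → ℝ) (hpm : Measurable p) (hGm : Measurable G)
    (M a K MG : ℝ) (ha0 : 0 ≤ a) (hK0 : 0 < K)
    (hpb : ∀ x ∈ Ω, 0 ≤ p x ∧ p x ≤ M)
    (hGb : ∀ x ∈ Ω, |G x| ≤ MG)
    (hKey : ∀ x ∈ Ω, (p x - a) ^ 2 ≤ K * G x) :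
    ∫ x in Ω, (p x - (∫ y in Ω, p y ∂μ) / (μ Ω).toReal) ^ 2 ∂μ
      ≤ K * ∫ x in Ω, G x ∂μ := by
  obtain ⟨V, hV⟩ : ∃ V : ℝ, V = (μ Ω).toReal := ⟨_, rfl⟩
  have hV0 : 0 < V := hV ▸ ENNReal.toReal_pos hpos.ne' hfin
  rw [← hV]
  obtain ⟨Pb, hPb⟩ : ∃ c : ℝ, c = (∫ y in Ω, p y ∂μ) / V := ⟨_, rfl⟩
  rw [← hPb]
  have hint : ∀ (f : α → ℝ) (Mf : ℝ), Measurable f →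
      (∀ x ∈ Ω, |f x| ≤ Mf) → IntegrableOn f Ω μ := by
    intro f Mf hf hb
    apply Measure.integrableOn_of_bounded hfin hf.aestronglyMeasurable
    exact (ae_restrict_iff' hΩm).2 (ae_of_all _ fun x hx => by
      simpa [Real.norm_eq_abs] using hb x hx)
  have hIp : IntegrableOn p Ω μ := hint p M hpm (fun x hx => by
    rw [abs_of_nonneg (hpb x hx).1]; exact (hpb x hx).2)
  have hIqa : IntegrableOn (fun x => (p x - a) ^ 2) Ω μ := by
    apply hint _ ((M + a) ^ 2) ((hpm.sub measurable_const).pow_const 2)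
    intro x hx
    show |(p x - a) ^ 2| ≤ _
    rw [abs_of_nonneg (sq_nonneg _)]
    nlinarith [(hpb x hx).1, (hpb x hx).2]
  have hIqP : IntegrableOn (fun x => (p x - Pb) ^ 2) Ω μ := by
    apply hint _ ((M + |Pb|) ^ 2) ((hpm.sub measurable_const).pow_const 2)
    intro x hx
    show |(p x - Pb) ^ 2| ≤ _
    rw [abs_of_nonneg (sq_nonneg _)]
    nlinarith [(hpb x hx).1, (hpb x hx).2, neg_abs_le Pb, le_abs_self Pb, abs_nonneg Pb]
  have hIG : IntegrableOn G Ω μ := hint G MG hGm hGb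
  have hIV : ∫ y in Ω, p y ∂μ = Pb * V := by
    rw [hPb, div_mul_cancel₀ _ hV0.ne']
  have hexp : ∀ x : α,
      (p x - a) ^ 2 = (p x - Pb) ^ 2 + (2 * (Pb - a) * p x + (a ^ 2 - Pb ^ 2)) := by
    intro x; ring
  have h1 : ∫ x in Ω, (p x - a) ^ 2 ∂μ
      = (∫ x in Ω, (p x - Pb) ^ 2 ∂μ)
        + (2 * (Pb - a) * (Pb * V) + (a ^ 2 - Pb ^ 2) * V) := by
    have hga : IntegrableOn (fun x => 2 * (Pb - a) * p x + (a ^ 2 - Pb ^ 2)) Ω μ :=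
      (hIp.const_mul (2 * (Pb - a))).add
        (integrableOn_const (C := a ^ 2 - Pb ^ 2) hfin)
    simp only [hexp]
    rw [integral_add hIqP hga]
    congr 1
    rw [integral_add (hIp.const_mul (2 * (Pb - a)))
      (integrableOn_const (C := a ^ 2 - Pb ^ 2) hfin),
      integral_const_mul, hIV, setIntegral_const, smul_eq_mul, measureReal_def, ← hV]
    ring
  have h2 : ∫ x in Ω, (p x - Pb) ^ 2 ∂μ ≤ ∫ x in Ω, (p x - a) ^ 2 ∂μ := by
    rw [h1]
    have he : 2 * (Pb - a) * (Pb * V) + (a ^ 2 - Pb ^ 2) * V = (Pb - a) ^ 2 * V := by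
      ring
    rw [he]
    have := mul_nonneg (sq_nonneg (Pb - a)) hV0.le
    linarith
  have h3 : ∫ x in Ω, (p x - a) ^ 2 ∂μ ≤ K * ∫ x in Ω, G x ∂μ := by
    calc ∫ x in Ω, (p x - a) ^ 2 ∂μ ≤ ∫ x in Ω, K * G x ∂μ :=
          setIntegral_mono_on hIqa (hIG.const_mul K) hΩm hKey
      _ = K * ∫ x in Ω, G x ∂μ := integral_const_mul K _
  exact h2.trans h3

end Aux

/-- The L² distance of the pressure to its average is controlled by the potential energy. -/
theorem pressure_L2_controlled_by_G (γ ρbar ρhat : ℝ) (hγ : 1 < γ)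
    (hρbar : 0 < ρbar) (hle : ρbar ≤ ρhat) :
    ∃ C > (0:ℝ), ∀ (Ω : Set (EuclideanSpace ℝ (Fin 3))),
      MeasurableSet Ω → Bornology.IsBounded Ω → 0 < volume Ω →
      ∀ ρ : EuclideanSpace ℝ (Fin 3) → ℝ, Measurable ρ →
        (∀ x ∈ Ω, 0 ≤ ρ x ∧ ρ x ≤ 2 * ρhat) →
        (∫ x in Ω, (Real.rpow (ρ x) γ
            - (∫ y in Ω, Real.rpow (ρ y) γ) / (volume Ω).toReal) ^ 2)
          ≤ C * ∫ x in Ω, Gfun γ ρbar (ρ x) := by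
  obtain ⟨K, hK0, hK⟩ := key_pointwise hγ hρbar hle
  have hρhat : 0 < ρhat := lt_of_lt_of_le hρbar hle
  have hγ0 : (0:ℝ) < γ := lt_trans zero_lt_one hγ
  have hγ1 : (0:ℝ) < γ - 1 := by linarith
  refine ⟨K, hK0, fun Ω hΩm hΩb hΩpos ρ hρm hρbd => ?_⟩
  simp only [Real.rpow_eq_pow]
  have hM0 : 0 < (2 * ρhat) ^ γ := Real.rpow_pos_of_pos (by positivity) _
  have ha0 : 0 < ρbar ^ γ := Real.rpow_pos_of_pos hρbar _
  have hc0 : (0:ℝ) ≤ γ * ρbar ^ (γ - 1) := by positivity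
  apply integral_step volume Ω hΩm hΩb.measure_lt_top.ne hΩpos
    (fun x => ρ x ^ γ) (fun x => Gfun γ ρbar (ρ x))
    ((Real.continuous_rpow_const hγ0.le).measurable.comp hρm)
    (((Real.continuous_rpow_const hγ0.le).measurable.comp hρm).sub
      measurable_const |>.sub
      (measurable_const.mul (hρm.sub measurable_const)) |>.div_const _)
    ((2 * ρhat) ^ γ) (ρbar ^ γ) K
    (((2 * ρhat) ^ γ + ρbar ^ γ + γ * ρbar ^ (γ - 1) * (2 * ρhat + ρbar)) / (γ - 1))
    ha0.le hK0
  · intro x hx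
    exact ⟨Real.rpow_nonneg (hρbd x hx).1 _,
      Real.rpow_le_rpow (hρbd x hx).1 (hρbd x hx).2 hγ0.le⟩
  · intro x hx
    have hb := hρbd x hx
    have hpx0 : (0:ℝ) ≤ ρ x ^ γ := Real.rpow_nonneg hb.1 _
    have hpxM : ρ x ^ γ ≤ (2 * ρhat) ^ γ := Real.rpow_le_rpow hb.1 hb.2 hγ0.le
    have h1 : |ρ x ^ γ - ρbar ^ γ - γ * ρbar ^ (γ - 1) * (ρ x - ρbar)|
        ≤ (2 * ρhat) ^ γ + ρbar ^ γ + γ * ρbar ^ (γ - 1) * (2 * ρhat + ρbar) := by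
      rw [abs_le]
      constructor
      · nlinarith [mul_le_mul_of_nonneg_left
          (show ρ x - ρbar ≤ 2 * ρhat by linarith [hb.2]) hc0]
      · nlinarith [mul_le_mul_of_nonneg_left
          (show -ρbar ≤ ρ x - ρbar by linarith [hb.1]) hc0]
    have heq : |Gfun γ ρbar (ρ x)|
        = |ρ x ^ γ - ρbar ^ γ - γ * ρbar ^ (γ - 1) * (ρ x - ρbar)| / (γ - 1) := by
      show |(ρ x ^ γ - ρbar ^ γ - γ * ρbar ^ (γ - 1) * (ρ x - ρbar)) / (γ - 1)| = _
      rw [abs_div, abs_of_pos hγ1]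
    rw [heq]
    exact div_le_div_of_nonneg_right h1 hγ1.le
  · intro x hx
    exact (hK (ρ x) (hρbd x hx).1 (hρbd x hx).2).2
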